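/- Let f be twice continuously differentiable on (a, b). Suppose a < x_{k-1} < x_k < x*_k < b with h > 0, x_k + h ≤ x*_k, f(x_k) ≤ f(x_{k-1}), f(x_k + h) > f(x_k), f(x*_k) < f(x_k), and f(x*_k) - f(x_k) = f'(x*_k)·(x*_k - x_k) with f''(x*_k) ≥ 0. Then there exist at least two distinct points in (x_{k-1}, x*_k] where f'' vanishes. -/

import Mathlib

open Set

theorem two_inflection_points (f : ℝ → ℝ) (a b xkm1 xk xs h : ℝ)
    (hf : ContDiffOn ℝ 2 f (Set.Ioo a b))
    (ha : a < xkm1) (h1 : xkm1 < xk) (h2 : xk < xs) (h3 : xs < b)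
    (hh : 0 < h) (hhs : xk + h ≤ xs)
    (hdesc : f xk ≤ f xkm1) (hasc : f (xk + h) > f xk)
    (hleap : f xs < f xk)
    (hsec : f xs - f xk = deriv f xs * (xs - xk))
    (hconv : 0 ≤ deriv (deriv f) xs) :
    ∃ y ∈ Set.Ioc xkm1 xs, ∃ z ∈ Set.Ioc xkm1 xs,
      y ≠ z ∧ deriv (deriv f) y = 0 ∧ deriv (deriv f) z = 0 := by
  have hsopen : IsOpen (Ioo a b) := isOpen_Ioo
  have hdf : DifferentiableOn ℝ f (Ioo a b) :=
    hf.differentiableOn (by norm_num)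
  have hf1 : ContDiffOn ℝ 1 (deriv f) (Ioo a b) := by
    exact hf.deriv_of_isOpen (m := 1) hsopen (by norm_num)
  have hdg : DifferentiableOn ℝ (deriv f) (Ioo a b) :=
    hf1.differentiableOn (by norm_num)
  have hcg2 : ContinuousOn (deriv (deriv f)) (Ioo a b) := by
    exact (hf1.deriv_of_isOpen (m := 0) hsopen (by norm_num)).continuousOn
  -- MVT on [xkm1, xk]
  have hsub1 : Icc xkm1 xk ⊆ Ioo a b := fun t ht =>
    ⟨lt_of_lt_of_le ha ht.1, lt_of_le_of_lt ht.2 (by linarith)⟩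
  obtain ⟨c1, hc1, hc1d⟩ := exists_deriv_eq_slope f h1
    ((hdf.continuousOn).mono hsub1)
    (hdf.mono (fun t ht => hsub1 ⟨le_of_lt ht.1, le_of_lt ht.2⟩))
  have hfc1 : deriv f c1 ≤ 0 := by
    rw [hc1d]
    apply div_nonpos_of_nonpos_of_nonneg <;> linarith
  -- MVT on [xk, xk+h]
  have hsub2 : Icc xk (xk + h) ⊆ Ioo a b := fun t ht =>
    ⟨by linarith [ht.1], by linarith [ht.2]⟩
  obtain ⟨c2, hc2, hc2d⟩ := exists_deriv_eq_slope f (by linarith : xk < xk + h)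
    ((hdf.continuousOn).mono hsub2)
    (hdf.mono (fun t ht => hsub2 ⟨le_of_lt ht.1, le_of_lt ht.2⟩))
  have hfc2 : 0 < deriv f c2 := by
    rw [hc2d]
    apply div_pos <;> linarith
  have hc1c2 : c1 < c2 := lt_trans hc1.2 hc2.1
  -- MVT on deriv f on [c1, c2]
  have hsub3 : Icc c1 c2 ⊆ Ioo a b := fun t ht =>
    ⟨by linarith [ht.1, hc1.1], by linarith [ht.2, hc2.2]⟩
  obtain ⟨c, hc, hcd⟩ := exists_deriv_eq_slope (deriv f) hc1c2
    ((hdg.continuousOn).mono hsub3)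
    (hdg.mono (fun t ht => hsub3 ⟨le_of_lt ht.1, le_of_lt ht.2⟩))
  have hcpos : 0 < deriv (deriv f) c := by
    rw [hcd]; apply div_pos <;> linarith
  -- f'(xs) < 0
  have hfxs : deriv f xs < 0 := by nlinarith
  -- MVT on deriv f on [c2, xs]
  have hc2xs : c2 < xs := by linarith [hc2.2]
  have hsub4 : Icc c2 xs ⊆ Ioo a b := fun t ht =>
    ⟨by linarith [ht.1, hc2.1], by linarith [ht.2]⟩
  obtain ⟨d, hd, hdd⟩ := exists_deriv_eq_slope (deriv f) hc2xs
    ((hdg.continuousOn).mono hsub4)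
    (hdg.mono (fun t ht => hsub4 ⟨le_of_lt ht.1, le_of_lt ht.2⟩))
  have hdneg : deriv (deriv f) d < 0 := by
    rw [hdd]; apply div_neg_of_neg_of_pos <;> linarith
  have hcd' : c < d := lt_trans hc.2 hd.1
  -- IVT for f'' on [c, d] : f'' c > 0 > f'' d
  have hsub5 : Icc c d ⊆ Ioo a b := fun t ht =>
    ⟨by linarith [ht.1, hc.1, hc1.1], by linarith [ht.2, hd.2]⟩
  have hy : (0 : ℝ) ∈ Icc (deriv (deriv f) d) (deriv (deriv f) c) :=
    ⟨le_of_lt hdneg, le_of_lt hcpos⟩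
  obtain ⟨y, hy1, hy2⟩ := intermediate_value_Icc' (le_of_lt hcd')
    (hcg2.mono hsub5) hy
  -- IVT for f'' on [d, xs] : f'' d < 0 ≤ f'' xs
  have hsub6 : Icc d xs ⊆ Ioo a b := fun t ht =>
    ⟨by linarith [ht.1, hd.1, hc2.1], by linarith [ht.2]⟩
  have hz : (0 : ℝ) ∈ Icc (deriv (deriv f) d) (deriv (deriv f) xs) :=
    ⟨le_of_lt hdneg, hconv⟩
  obtain ⟨z, hz1, hz2⟩ := intermediate_value_Icc (le_of_lt hd.2)
    (hcg2.mono hsub6) hz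
  have hyd : y < d := lt_of_le_of_ne hy1.2 (fun e => by rw [e] at hy2; linarith)
  have hzd : d < z := lt_of_le_of_ne hz1.1 (fun e => by rw [← e] at hz2; linarith)
  refine ⟨y, ⟨?_, ?_⟩, z, ⟨?_, hz1.2⟩, ?_, hy2, hz2⟩
  · linarith [hy1.1, hc.1, hc1.1]
  · linarith [hd.2]
  · linarith [hz1.1, hd.1, hc2.1]
  · exact ne_of_lt (lt_trans hyd hzd)
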